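/- For every weight w and every dyadic interval J, (1/|J|) ∑_{I ∈ D(J)} |I| (Δ_I w)² / ⟨w⟩_I³ ≤ ⟨w^{-1}⟩_J, where Δ_I w = (⟨w⟩_{I₊} − ⟨w⟩_{I₋})/2. -/

import Mathlib

open MeasureTheory Set

/-- A dyadic interval `[k·2⁻ⁿ, (k+1)·2⁻ⁿ)`. -/
structure DyadicI where
  n : ℤ
  k : ℤ

namespace DyadicI

noncomputable def len (I : DyadicI) : ℝ := (2:ℝ) ^ (-I.n)

noncomputable def left (I : DyadicI) : ℝ := I.k * I.len

noncomputable def set (I : DyadicI) : Set ℝ := Set.Ico I.left (I.left + I.len)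

/-- left half -/
def minus (I : DyadicI) : DyadicI := ⟨I.n + 1, 2 * I.k⟩

/-- right half -/
def plus (I : DyadicI) : DyadicI := ⟨I.n + 1, 2 * I.k + 1⟩

/-- dyadic parent -/
def parent (I : DyadicI) : DyadicI := ⟨I.n - 1, Int.fdiv I.k 2⟩

/-- `w(I) = ∫_I w` -/
noncomputable def intg (w : ℝ → ℝ) (I : DyadicI) : ℝ := ∫ x in I.set, w x

/-- `⟨w⟩_I = |I|⁻¹ ∫_I w` -/
noncomputable def avg (w : ℝ → ℝ) (I : DyadicI) : ℝ := (∫ x in I.set, w x) / I.len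

/-- Haar function `h_I = |I|^{-1/2}(χ_{I₊} - χ_{I₋})` -/
noncomputable def haar (I : DyadicI) : ℝ → ℝ := fun x =>
  (1 / Real.sqrt I.len) *
    (I.plus.set.indicator (fun _ => (1:ℝ)) x - I.minus.set.indicator (fun _ => (1:ℝ)) x)

/-- weighted Haar function `h^w_I` -/
noncomputable def whaar (w : ℝ → ℝ) (I : DyadicI) : ℝ → ℝ := fun x =>
  (1 / Real.sqrt (intg w I)) *
    (Real.sqrt (intg w I.minus / intg w I.plus) * I.plus.set.indicator (fun _ => (1:ℝ)) x
      - Real.sqrt (intg w I.plus / intg w I.minus) * I.minus.set.indicator (fun _ => (1:ℝ)) x)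

/-- `Δ_I w = (⟨w⟩_{I₊} − ⟨w⟩_{I₋})/2` -/
noncomputable def del (w : ℝ → ℝ) (I : DyadicI) : ℝ := (avg w I.plus - avg w I.minus) / 2

end DyadicI

/-- weighted inner product `⟨f,g⟩_w = ∫ f g w` -/
noncomputable def wip (w f g : ℝ → ℝ) : ℝ := ∫ x, f x * g x * w x

/-- a weight: locally integrable and positive a.e. -/
def IsWeight (w : ℝ → ℝ) : Prop :=
  MeasureTheory.LocallyIntegrable w ∧ ∀ᵐ x ∂(volume : Measure ℝ), 0 < w x

noncomputable def winv (w : ℝ → ℝ) : ℝ → ℝ := fun x => (w x)⁻¹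

/-- membership in dyadic A₂ -/
def MemA2d (w : ℝ → ℝ) : Prop :=
  BddAbove (Set.range fun I : DyadicI => DyadicI.avg w I * DyadicI.avg (winv w) I)

/-- the dyadic A₂ characteristic `[w]_{A₂^d}` -/
noncomputable def A2d (w : ℝ → ℝ) : ℝ :=
  ⨆ I : DyadicI, DyadicI.avg w I * DyadicI.avg (winv w) I

/-- the dyadic BMO norm -/
noncomputable def bmoD (b : ℝ → ℝ) : ℝ :=
  ⨆ I : DyadicI, (∫ x in I.set, |b x - DyadicI.avg b I|) / I.len

/-- membership in dyadic BMO -/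
def MemBMOd (b : ℝ → ℝ) : Prop :=
  BddAbove (Set.range fun I : DyadicI => (∫ x in I.set, |b x - DyadicI.avg b I|) / I.len)


deriving instance DecidableEq for DyadicI

namespace DyadicI

lemma len_pos (I : DyadicI) : 0 < I.len := zpow_pos (by norm_num) _

lemma minus_len (I : DyadicI) : I.minus.len = I.len / 2 := by
  simp only [len, minus]
  rw [show -(I.n+1) = -I.n + (-1) by ring, zpow_add₀ (by norm_num : (2:ℝ) ≠ 0)]
  norm_num; ring

lemma plus_len (I : DyadicI) : I.plus.len = I.len / 2 := by
  simp only [len, plus]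
  rw [show -(I.n+1) = -I.n + (-1) by ring, zpow_add₀ (by norm_num : (2:ℝ) ≠ 0)]
  norm_num; ring

lemma minus_left (I : DyadicI) : I.minus.left = I.left := by
  simp only [left, minus_len, minus, len]
  push_cast
  rw [show -(I.n+1) = -I.n + (-1) by ring, zpow_add₀ (by norm_num : (2:ℝ) ≠ 0)]
  ring

lemma plus_left (I : DyadicI) : I.plus.left = I.left + I.len / 2 := by
  simp only [left, plus_len, plus, len]
  push_cast
  rw [show -(I.n+1) = -I.n + (-1) by ring, zpow_add₀ (by norm_num : (2:ℝ) ≠ 0)]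
  ring

lemma set_eq_union (I : DyadicI) : I.set = I.minus.set ∪ I.plus.set := by
  simp only [set, minus_left, plus_left, minus_len, plus_len]
  rw [Set.Ico_union_Ico_eq_Ico (by linarith [I.len_pos]) (by linarith [I.len_pos])]
  ring_nf

lemma disj (I : DyadicI) : Disjoint I.minus.set I.plus.set := by
  simp only [set, minus_left, plus_left, minus_len, plus_len]
  exact Set.Ico_disjoint_Ico_same

lemma minus_subset (I : DyadicI) : I.minus.set ⊆ I.set := by
  rw [I.set_eq_union]; exact Set.subset_union_left

lemma plus_subset (I : DyadicI) : I.plus.set ⊆ I.set := by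
  rw [I.set_eq_union]; exact Set.subset_union_right

lemma set_nonempty (I : DyadicI) : I.set.Nonempty := ⟨I.left, le_refl _, by linarith [I.len_pos]⟩

lemma subset_iff {I J : DyadicI} : I.set ⊆ J.set ↔ J.left ≤ I.left ∧ I.left + I.len ≤ J.left + J.len := by
  rw [set, set, Set.Ico_subset_Ico_iff (by linarith [I.len_pos])]

lemma len_le_of_subset {I J : DyadicI} (h : I.set ⊆ J.set) : I.len ≤ J.len := by
  obtain ⟨h1, h2⟩ := subset_iff.mp h; linarith

lemma subset_n {I J : DyadicI} (h : I.set ⊆ J.set) : J.n ≤ I.n := by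
  have := len_le_of_subset h
  simp only [len] at this
  have := (zpow_le_zpow_iff_right₀ (by norm_num : (1:ℝ) < 2)).mp this
  omega

lemma eq_of_subset_of_n_eq {I J : DyadicI} (h : I.set ⊆ J.set) (hn : I.n = J.n) : I = J := by
  obtain ⟨h1, h2⟩ := subset_iff.mp h
  have hlen : I.len = J.len := by simp [len, hn]
  have hleft : I.left = J.left := le_antisymm (by linarith) h1
  have hk : I.k = J.k := by
    have := hleft
    simp only [left, hlen] at this
    have h2 : (I.k : ℝ) = J.k := by
      have := mul_right_cancel₀ (ne_of_gt J.len_pos) this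
      exact this
    exact_mod_cast h2
  cases I; cases J; simp_all


lemma subset_half {I J : DyadicI} (h : I.set ⊆ J.set) (hn : J.n < I.n) :
    I.set ⊆ J.minus.set ∨ I.set ⊆ J.plus.set := by
  obtain ⟨h1, h2⟩ := subset_iff.mp h
  rcases le_or_gt (J.left + J.len / 2) I.left with hc | hc
  · right
    rw [subset_iff, plus_left, plus_len]
    exact ⟨hc, by linarith⟩
  · left
    rw [subset_iff, minus_left, minus_len]
    refine ⟨h1, ?_⟩
    set d := (I.n - J.n - 1).toNat with hdd
    have hdz : (d : ℤ) = I.n - J.n - 1 := by omega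
    have hMeq : J.left + J.len / 2 = ((2*J.k+1) * 2^d : ℤ) * (2:ℝ)^(-I.n) := by
      simp only [left, len]
      push_cast
      rw [show ((2:ℝ)^(d:ℕ)) = (2:ℝ)^((d:ℤ)) from (zpow_natCast 2 d).symm,
        mul_assoc, ← zpow_add₀ (by norm_num : (2:ℝ)≠0), hdz]
      rw [show I.n - J.n - 1 + -I.n = -J.n + -1 by ring,
        zpow_add₀ (by norm_num : (2:ℝ)≠0)]
      norm_num
      ring
    have hp : (0:ℝ) < (2:ℝ)^(-I.n) := zpow_pos (by norm_num) _
    have hk1 : I.k < (2*J.k+1) * 2^d := by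
      have : (I.k : ℝ) * (2:ℝ)^(-I.n) < ((2*J.k+1)*2^d : ℤ) * (2:ℝ)^(-I.n) := by
        rw [← hMeq]; exact hc
      exact_mod_cast (mul_lt_mul_iff_of_pos_right hp).mp this
    have hk2 : ((I.k : ℝ) + 1) ≤ (((2*J.k+1)*2^d : ℤ) : ℝ) := by
      exact_mod_cast Int.add_one_le_iff.mpr hk1
    have : I.left + I.len = ((I.k:ℝ)+1) * (2:ℝ)^(-I.n) := by
      simp only [left, len]; ring
    rw [this, hMeq]
    exact mul_le_mul_of_nonneg_right hk2 (le_of_lt hp)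

lemma measurableSet_set (I : DyadicI) : MeasurableSet I.set := measurableSet_Ico

lemma volume_set (I : DyadicI) : volume I.set = ENNReal.ofReal I.len := by
  simp [set, Real.volume_Ico]



lemma integrableOn (w : ℝ → ℝ) (hw : MeasureTheory.LocallyIntegrable w) (I : DyadicI) :
    IntegrableOn w I.set := by
  have : IntegrableOn w (Set.Icc I.left (I.left + I.len)) := hw.integrableOn_isCompact isCompact_Icc
  exact this.mono_set Set.Ico_subset_Icc_self

lemma intg_pos {w : ℝ → ℝ} (hw : IsWeight w) (I : DyadicI) : 0 < intg w I := by
  rw [intg]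
  rw [setIntegral_pos_iff_support_of_nonneg_ae]
  · have hz : volume {x : ℝ | ¬ 0 < w x} = 0 := by
      have := hw.2; rw [ae_iff] at this; exact this
    have hsub : I.set \ {x | ¬ 0 < w x} ⊆ Function.support w ∩ I.set := by
      rintro x ⟨hx1, hx2⟩
      simp only [Set.mem_setOf_eq, not_not] at hx2
      exact ⟨ne_of_gt hx2, hx1⟩
    have h1 : volume (I.set \ {x | ¬ 0 < w x}) = volume I.set :=
      measure_diff_null hz
    have h2 : (0:ENNReal) < volume I.set := by
      rw [volume_set]; exact ENNReal.ofReal_pos.mpr I.len_pos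
    calc (0:ENNReal) < volume I.set := h2
      _ = volume (I.set \ {x | ¬ 0 < w x}) := h1.symm
      _ ≤ volume (Function.support w ∩ I.set) := measure_mono hsub
  · filter_upwards [ae_restrict_of_ae hw.2] with x hx using le_of_lt hx
  · exact integrableOn w hw.1 I


lemma len_ne (I : DyadicI) : I.len ≠ 0 := ne_of_gt I.len_pos

lemma intg_add {w : ℝ → ℝ} (hw : MeasureTheory.LocallyIntegrable w) (I : DyadicI) :
    intg w I = intg w I.minus + intg w I.plus := by
  simp only [intg]
  rw [I.set_eq_union, setIntegral_union I.disj I.plus.measurableSet_set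
    (integrableOn w hw I.minus) (integrableOn w hw I.plus)]

lemma avg_eq {w : ℝ → ℝ} (hw : MeasureTheory.LocallyIntegrable w) (I : DyadicI) :
    avg w I = (avg w I.minus + avg w I.plus) / 2 := by
  have h := intg_add hw I
  simp only [avg, intg] at *
  rw [h, minus_len, plus_len]
  field_simp

lemma avg_pos {w : ℝ → ℝ} (hw : IsWeight w) (I : DyadicI) : 0 < avg w I :=
  div_pos (intg_pos hw I) I.len_pos

lemma base {w : ℝ → ℝ} (hw : IsWeight w) (hwi : MeasureTheory.LocallyIntegrable (winv w))
    (J : DyadicI) : J.len / avg w J ≤ intg (winv w) J := by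
  set u := avg w J with hu
  have hup : 0 < u := avg_pos hw J
  have hInt : IntegrableOn w J.set := integrableOn w hw.1 J
  have hIntInv : IntegrableOn (winv w) J.set := integrableOn (winv w) hwi J
  have hmono : ∫ x in J.set, (2/u - w x/u^2) ≤ ∫ x in J.set, winv w x := by
    apply integral_mono_ae
    · exact (integrableOn_const (by rw [volume_set]; exact ENNReal.ofReal_ne_top)).sub
        (hInt.div_const _)
    · exact hIntInv
    · filter_upwards [ae_restrict_of_ae hw.2] with x hx
      have h1 : 0 < w x := hx
      show 2/u - w x/u^2 ≤ (w x)⁻¹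
      have e1 : 2/u - w x/u^2 = (2*u - w x)/u^2 := by field_simp
      have e2 : (w x)⁻¹ = 1 / w x := by rw [inv_eq_one_div]
      rw [e1, e2, div_le_div_iff₀ (by positivity) h1]
      nlinarith [sq_nonneg (w x - u)]
  have hvol : (volume J.set).toReal = J.len := by
    rw [volume_set, ENNReal.toReal_ofReal (le_of_lt J.len_pos)]
  have hcalc : ∫ x in J.set, (2/u - w x/u^2) = J.len / u := by
    rw [integral_sub (integrableOn_const (C := 2/u) (s := J.set) (μ := volume) (by rw [volume_set]; exact ENNReal.ofReal_ne_top))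
      (hInt.div_const _)]
    rw [setIntegral_const, measureReal_def, hvol, integral_div]
    have hwint : (∫ x in J.set, w x) = u * J.len := by
      rw [hu, avg, div_mul_cancel₀ _ J.len_ne]
    rw [hwint]
    field_simp
    rw [smul_eq_mul, show u * (J.len * (2 / u)) = 2 * J.len by
      rw [div_eq_mul_inv]; linear_combination (2 * J.len) * (mul_inv_cancel₀ hup.ne')]
    ring
  rw [intg, ← hcalc]
  exact hmono

lemma alg {a b : ℝ} (ha : 0 < a) (hb : 0 < b) :
    ((b-a)/2)^2 / ((a+b)/2)^3 ≤ 1/(2*a) + 1/(2*b) - 1/((a+b)/2) := by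
  have hu : 0 < (a+b)/2 := by linarith
  have h1 : 1/(2*a) + 1/(2*b) - 1/((a+b)/2) = ((b-a)/2)^2 / (a*b*((a+b)/2)) := by
    field_simp
    ring
  rw [h1]
  apply div_le_div_of_nonneg_left (by positivity) (by positivity)
  nlinarith [sq_nonneg (a-b)]

noncomputable def term (w : ℝ → ℝ) (I : DyadicI) : ℝ := I.len * (del w I)^2 / (avg w I)^3

lemma term_nonneg {w : ℝ → ℝ} (hw : IsWeight w) (I : DyadicI) : 0 ≤ term w I := by
  have := avg_pos hw I
  rw [term]
  exact div_nonneg (mul_nonneg (le_of_lt I.len_pos) (sq_nonneg _)) (le_of_lt (pow_pos this 3))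

lemma step {w : ℝ → ℝ} (hw : IsWeight w) (I : DyadicI) :
    term w I + I.len / avg w I ≤ I.minus.len / avg w I.minus + I.plus.len / avg w I.plus := by
  have ha := avg_pos hw I.minus
  have hb := avg_pos hw I.plus
  have havg := avg_eq hw.1 I
  have hlp := I.len_pos
  rw [term, del, havg, minus_len, plus_len]
  have key := alg ha hb
  set a := avg w I.minus
  set b := avg w I.plus
  have h2 : I.len * ((b - a)/2)^2 / ((a+b)/2)^3 = I.len * (((b-a)/2)^2 / ((a+b)/2)^3) := by ring
  rw [h2]
  have h3 : I.len / 2 / a + I.len / 2 / b = I.len * (1/(2*a) + 1/(2*b)) := by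
    field_simp
  have h4 : I.len / ((a+b)/2) = I.len * (1/((a+b)/2)) := by ring
  rw [h3, h4]
  nlinarith [mul_le_mul_of_nonneg_left key (le_of_lt hlp)]


noncomputable def famS : ℕ → DyadicI → Finset DyadicI
  | 0, _ => ∅
  | (N+1), J => insert J (famS N J.minus ∪ famS N J.plus)

lemma mem_famS {N : ℕ} {J I : DyadicI} (h : I ∈ famS N J) : I.set ⊆ J.set ∧ J.n ≤ I.n := by
  induction N generalizing J with
  | zero => simp [famS] at h
  | succ N ih =>
    simp only [famS, Finset.mem_insert, Finset.mem_union] at h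
    rcases h with h | h | h
    · subst h; exact ⟨subset_rfl, le_refl _⟩
    · obtain ⟨h1, h2⟩ := ih h
      exact ⟨h1.trans J.minus_subset, by simp only [minus] at h2; omega⟩
    · obtain ⟨h1, h2⟩ := ih h
      exact ⟨h1.trans J.plus_subset, by simp only [plus] at h2; omega⟩

lemma famS_disj (N : ℕ) (J : DyadicI) : Disjoint (famS N J.minus) (famS N J.plus) := by
  rw [Finset.disjoint_left]
  intro I h1 h2
  have s1 := (mem_famS h1).1
  have s2 := (mem_famS h2).1
  obtain ⟨x, hx⟩ := I.set_nonempty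
  exact (J.disj.le_bot ⟨s1 hx, s2 hx⟩ : x ∈ (⊥ : Set ℝ))

lemma not_mem_famS (N : ℕ) (J : DyadicI) :
    J ∉ famS N J.minus ∪ famS N J.plus := by
  intro h
  rcases Finset.mem_union.mp h with h | h
  · have := (mem_famS h).2; simp only [minus] at this; omega
  · have := (mem_famS h).2; simp only [plus] at this; omega

lemma sum_famS {w : ℝ → ℝ} (hw : IsWeight w)
    (hwi : MeasureTheory.LocallyIntegrable (winv w)) (N : ℕ) (J : DyadicI) :
    ∑ I ∈ famS N J, term w I ≤ intg (winv w) J - J.len / avg w J := by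
  induction N generalizing J with
  | zero => simpa [famS] using sub_nonneg.mpr (base hw hwi J)
  | succ N ih =>
    rw [famS, Finset.sum_insert (not_mem_famS N J), Finset.sum_union (famS_disj N J)]
    have h1 := ih J.minus
    have h2 := ih J.plus
    have h3 := step hw J
    have h4 : intg (winv w) J = intg (winv w) J.minus + intg (winv w) J.plus := intg_add hwi J
    linarith

lemma mem_famS_of {N : ℕ} {J I : DyadicI} (h : I.set ⊆ J.set) (hn : I.n < J.n + N) :
    I ∈ famS N J := by
  induction N generalizing J with
  | zero => have := subset_n h; omega
  | succ N ih =>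
    rcases eq_or_lt_of_le (subset_n h) with he | hl
    · rw [famS, Finset.mem_insert]
      exact Or.inl (eq_of_subset_of_n_eq h he.symm)
    · rw [famS, Finset.mem_insert, Finset.mem_union]
      rcases subset_half h hl with hs | hs
      · exact Or.inr (Or.inl (ih hs (by simp only [minus]; omega)))
      · exact Or.inr (Or.inr (ih hs (by simp only [plus]; omega)))

end DyadicI

/-- `(1/|J|) ∑_{I⊆J} |I| (Δ_I w)²/⟨w⟩_I³ ≤ ⟨w⁻¹⟩_J`. -/
theorem stmt6 (w : ℝ → ℝ) (hw : IsWeight w)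
    (hwi : MeasureTheory.LocallyIntegrable (winv w)) (J : DyadicI) :
    (1 / J.len) * ∑' I : {I : DyadicI // I.set ⊆ J.set},
        I.1.len * (DyadicI.del w I.1) ^ 2 / (DyadicI.avg w I.1) ^ 3
      ≤ DyadicI.avg (winv w) J := by
  set f : {I : DyadicI // I.set ⊆ J.set} → ℝ := fun I => DyadicI.term w I.1 with hf
  have hbd : ∀ u : Finset {I : DyadicI // I.set ⊆ J.set},
      ∑ I ∈ u, f I ≤ DyadicI.intg (winv w) J := by
    intro u
    set N := (u.sup fun I => (I.1.n - J.n).toNat) + 1 with hN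
    have hsub : u.image Subtype.val ⊆ DyadicI.famS N J := by
      intro I hI
      obtain ⟨I', hI', rfl⟩ := Finset.mem_image.mp hI
      apply DyadicI.mem_famS_of I'.2
      have h1 : (I'.1.n - J.n).toNat ≤ u.sup fun I => (I.1.n - J.n).toNat :=
        Finset.le_sup (f := fun I : {I : DyadicI // I.set ⊆ J.set} => (I.1.n - J.n).toNat) hI'
      omega
    calc ∑ I ∈ u, f I = ∑ I ∈ u.image Subtype.val, DyadicI.term w I := by
          rw [Finset.sum_image (fun a _ b _ h => Subtype.val_injective h)]
      _ ≤ ∑ I ∈ DyadicI.famS N J, DyadicI.term w I :=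
          Finset.sum_le_sum_of_subset_of_nonneg hsub (fun I _ _ => DyadicI.term_nonneg hw I)
      _ ≤ DyadicI.intg (winv w) J - J.len / DyadicI.avg w J := DyadicI.sum_famS hw hwi N J
      _ ≤ DyadicI.intg (winv w) J := by
          have h0 : 0 ≤ J.len / DyadicI.avg w J :=
            div_nonneg (le_of_lt J.len_pos) (le_of_lt (DyadicI.avg_pos hw J))
          linarith
  have hsummable : Summable f := summable_of_sum_le (fun I => DyadicI.term_nonneg hw I.1) hbd
  have htsum : ∑' I, f I ≤ DyadicI.intg (winv w) J := Summable.tsum_le_of_sum_le hsummable hbd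
  have heq : (∑' I : {I : DyadicI // I.set ⊆ J.set},
      I.1.len * (DyadicI.del w I.1) ^ 2 / (DyadicI.avg w I.1) ^ 3) = ∑' I, f I := rfl
  rw [heq, one_div_mul_eq_div]
  show (∑' I, f I) / J.len ≤ DyadicI.intg (winv w) J / J.len
  exact (div_le_div_iff_of_pos_right J.len_pos).mpr htsum
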